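/- If there exists an α-resolvable BIBD(n,4,λ) with n even and λ = 3α, then there exists a configuration (2,4) GDD(n,2,6; (n/2)(λ + α/2), 2α(n−1)). -/

import Mathlib

/-- A group divisible design with two groups of size `n` (the points are
`Fin 2 × Fin n`, the first coordinate indicating the group), blocks of size `k`,
each point lying in `rep` blocks, every pair of distinct points in the same
group lying in exactly `l1` blocks, and every pair of points in different
groups lying in exactly `l2` blocks. -/
structure GDD (n k l1 l2 : ℕ) where
  blocks : Multiset (Finset (Fin 2 × Fin n))
  blockCard : ∀ B ∈ blocks, B.card = k
  rep : ℕ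
  pointRep : ∀ x : Fin 2 × Fin n,
    (blocks.filter fun B => x ∈ B).card = rep
  samePairs : ∀ x y : Fin 2 × Fin n, x ≠ y → x.1 = y.1 →
    (blocks.filter fun B => x ∈ B ∧ y ∈ B).card = l1
  crossPairs : ∀ x y : Fin 2 × Fin n, x.1 ≠ y.1 →
    (blocks.filter fun B => x ∈ B ∧ y ∈ B).card = l2

/-- The design has fixed block configuration `(s,t)`: every block meets one
group in exactly `s` points and the other group in exactly `t` points. -/
def GDD.HasConfig {n k l1 l2 : ℕ} (D : GDD n k l1 l2) (s t : ℕ) : Prop :=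
  ∀ B ∈ D.blocks,
    ((B.filter fun p => p.1 = 0).card = s ∧ (B.filter fun p => p.1 = 1).card = t) ∨
    ((B.filter fun p => p.1 = 0).card = t ∧ (B.filter fun p => p.1 = 1).card = s)

/-- A balanced incomplete block design `BIBD(n,k,lam)`: a collection of
`k`-element subsets (blocks) of an `n`-set such that every pair of distinct
points lies in exactly `lam` blocks. -/
structure BIBD (n k lam : ℕ) where
  blocks : Multiset (Finset (Fin n))
  blockCard : ∀ B ∈ blocks, B.card = k
  pairs : ∀ x y : Fin n, x ≠ y →
    (blocks.filter fun B => x ∈ B ∧ y ∈ B).card = lam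


section infra
variable {α β γ : Type*}

lemma msum_filter_card (P : γ → Prop) [DecidablePred P] (cls : Multiset (Multiset γ)) :
    ((cls.sum).filter P).card = (cls.map fun s => ((s.filter P).card : ℕ)).sum := by
  induction cls using Multiset.induction_on with
  | empty => simp
  | cons s t ih => simp [Multiset.filter_add, ih]

lemma lsum_filter_card (P : γ → Prop) [DecidablePred P] (L : List (Multiset γ)) :
    ((L.sum).filter P).card = (L.map fun s => ((s.filter P).card : ℕ)).sum := by
  induction L with
  | nil => simp
  | cons s t ih => simp [Multiset.filter_add, ih]

lemma sum_ite_card (Q : α → Prop) [DecidablePred Q] (c : ℕ) (s : Multiset α) :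
    (s.map fun B => if Q B then c else 0).sum = (s.filter Q).card * c := by
  induction s using Multiset.induction_on with
  | empty => simp
  | cons B t ih =>
    by_cases h : Q B <;> simp [h, ih, Multiset.filter_cons, add_mul, add_comm]

lemma count_bind (C : Multiset α) (E : Multiset β) (f : α → β → γ)
    (P : γ → Prop) [DecidablePred P] :
    (((C.bind fun B => E.map (f B))).filter P).card
      = (C.map fun B => ((E.filter fun e => P (f B e)).card : ℕ)).sum := by
  induction C using Multiset.induction_on with
  | empty => simp
  | cons B t ih =>
    simp only [Multiset.cons_bind, Multiset.filter_add, Multiset.card_add, ih,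
      Multiset.map_cons, Multiset.sum_cons, Multiset.filter_map, Multiset.card_map]
    rfl

lemma count_bind_split (C : Multiset α) (E : Multiset β) (f : α → β → γ)
    (P : γ → Prop) [DecidablePred P] (Q : α → Prop) [DecidablePred Q]
    (R : β → Prop) [DecidablePred R] (h : ∀ B e, P (f B e) ↔ Q B ∧ R e) :
    (((C.bind fun B => E.map (f B))).filter P).card
      = (C.filter Q).card * (E.filter R).card := by
  rw [count_bind]
  have hcongr : ∀ B ∈ C, ((E.filter fun e => P (f B e)).card : ℕ)
      = if Q B then (E.filter R).card else 0 := by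
    intro B _
    by_cases hQ : Q B
    · simp only [hQ, if_true]
      congr 1
      apply Multiset.filter_congr
      intro e _
      simp [h, hQ]
    · simp only [hQ, if_false]
      rw [Multiset.card_eq_zero, Multiset.filter_eq_nil]
      intro e _
      simp [h, hQ]
  rw [Multiset.map_congr rfl hcongr, sum_ite_card]

lemma pair_double_count [DecidableEq α] [Fintype α] (x : α) (s : Multiset (Finset α)) :
    ∑ y ∈ Finset.univ.erase x, ((s.filter fun B => x ∈ B ∧ y ∈ B).card : ℕ)
      = (s.map fun B => if x ∈ B then (B.erase x).card else 0).sum := by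
  induction s using Multiset.induction_on with
  | empty => simp
  | cons B t ih =>
    simp only [Multiset.filter_cons, Multiset.card_add, Finset.sum_add_distrib, ih,
      Multiset.map_cons, Multiset.sum_cons]
    congr 1
    by_cases hx : x ∈ B
    · simp only [hx, if_true, true_and]
      rw [show ∑ y ∈ Finset.univ.erase x, (Multiset.card (if y ∈ B then ({B} : Multiset _) else 0)) = ∑ y ∈ Finset.univ.erase x, if y ∈ B then 1 else 0 from
        Finset.sum_congr rfl fun y _ => by by_cases hy : y ∈ B <;> simp [hy]]
      rw [← Finset.card_filter]
      congr 1
      ext y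
      simp [Finset.mem_erase, and_comm]
    · simp [hx]

lemma point_double_count [DecidableEq α] [Fintype α] (s : Multiset (Finset α)) :
    ∑ x : α, ((s.filter fun B => x ∈ B).card : ℕ) = (s.map Finset.card).sum := by
  induction s using Multiset.induction_on with
  | empty => simp
  | cons B t ih =>
    simp only [Multiset.filter_cons, Multiset.card_add, Finset.sum_add_distrib, ih,
      Multiset.map_cons, Multiset.sum_cons]
    congr 1
    rw [show ∑ x : α, (Multiset.card (if x ∈ B then ({B} : Multiset _) else 0)) = ∑ x : α, if x ∈ B then 1 else 0 from
      Finset.sum_congr rfl fun y _ => by by_cases hy : y ∈ B <;> simp [hy]]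
    rw [← Finset.card_filter]
    simp [Finset.filter_mem_eq_inter]

lemma chunk_exists (q : ℕ) : ∀ (m : ℕ) (s : Multiset α), Multiset.card s = m * q →
    ∃ L : List (Multiset α), L.length = m ∧ (∀ E ∈ L, Multiset.card E = q) ∧ L.sum = s := by
  intro m
  induction m with
  | zero =>
    intro s hs
    refine ⟨[], rfl, by simp, ?_⟩
    have : Multiset.card s = 0 := by simpa using hs
    simp [Multiset.card_eq_zero.mp this]
  | succ m ih =>
    intro s hs
    have hqle : q ≤ Multiset.card s := by
      rw [hs]
      calc q = 1 * q := (one_mul q).symm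
      _ ≤ (m+1) * q := Nat.mul_le_mul_right q (by omega)
    have hsplit : (↑(s.toList.take q) : Multiset α) + ↑(s.toList.drop q) = s := by
      rw [show (↑(List.take q s.toList) + ↑(List.drop q s.toList) : Multiset α) = ↑(List.take q s.toList ++ List.drop q s.toList) from rfl, List.take_append_drop, Multiset.coe_toList]
    have hcardtake : Multiset.card (↑(s.toList.take q) : Multiset α) = q := by
      simp only [Multiset.coe_card, List.length_take, Multiset.length_toList]
      omega
    have hrest : Multiset.card (↑(s.toList.drop q) : Multiset α) = m * q := by
      simp only [Multiset.coe_card, List.length_drop, Multiset.length_toList, hs]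
      have : (m+1)*q = m*q + q := by ring
      omega
    obtain ⟨L, hL1, hL2, hL3⟩ := ih _ hrest
    refine ⟨(↑(s.toList.take q) : Multiset α) :: L, by simp [hL1], ?_, ?_⟩
    · intro E hE
      rcases List.mem_cons.mp hE with h | h
      · rw [h]; exact hcardtake
      · exact hL2 E h
    · simp only [List.sum_cons, hL3, hsplit]
end infra
section listlemmas
variable {α β γ : Type*}

lemma lsum_map_add (L : List α) (f g : α → ℕ) :
    (L.map fun p => f p + g p).sum = (L.map f).sum + (L.map g).sum := by
  induction L with
  | nil => simp
  | cons p t ih => simp [ih]; omega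

lemma lsum_const (L : List α) (c : ℕ) : (L.map fun _ => c).sum = L.length * c := by
  induction L with
  | nil => simp
  | cons p t ih => simp [ih]; ring

lemma lsum_fst (l1 : List α) (l2 : List β) (h : l1.length ≤ l2.length) (f : α → ℕ) :
    ((l1.zip l2).map fun p => f p.1).sum = (l1.map f).sum := by
  rw [show (fun p : α × β => f p.1) = f ∘ Prod.fst from rfl, ← List.map_map,
    List.map_fst_zip h]

lemma lsum_snd (l1 : List α) (l2 : List β) (h : l2.length ≤ l1.length) (f : β → ℕ) :
    ((l1.zip l2).map fun p => f p.2).sum = (l2.map f).sum := by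
  rw [show (fun p : α × β => f p.2) = f ∘ Prod.snd from rfl, ← List.map_map,
    List.map_snd_zip h]

lemma toList_map_sum (s : Multiset α) (f : α → ℕ) :
    (s.toList.map f).sum = (s.map f).sum := by
  rw [← Multiset.sum_coe, ← Multiset.map_coe, Multiset.coe_toList]

lemma mem_listsum {z : γ} {L : List (Multiset γ)} (h : z ∈ L.sum) :
    ∃ s ∈ L, z ∈ s := by
  induction L with
  | nil => simp at h
  | cons s t ih =>
    rw [List.sum_cons, Multiset.mem_add] at h
    rcases h with h | h
    · exact ⟨s, List.mem_cons_self, h⟩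
    · obtain ⟨s', hs', hz⟩ := ih h
      exact ⟨s', List.mem_cons_of_mem _ hs', hz⟩

lemma mem_listsum_of_mem {z : γ} {s : Multiset γ} {L : List (Multiset γ)}
    (hs : s ∈ L) (hz : z ∈ s) : z ∈ L.sum := by
  induction L with
  | nil => simp at hs
  | cons s' t ih =>
    rw [List.sum_cons, Multiset.mem_add]
    rcases List.mem_cons.mp hs with rfl | h
    · exact Or.inl hz
    · exact Or.inr (ih h)

lemma mem_msum_of_mem {z : γ} {s : Multiset γ} {cls : Multiset (Multiset γ)}
    (hs : s ∈ cls) (hz : z ∈ s) : z ∈ cls.sum := by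
  induction cls using Multiset.induction_on with
  | empty => simp at hs
  | cons s' t ih =>
    rw [Multiset.sum_cons, Multiset.mem_add]
    rcases Multiset.mem_cons.mp hs with rfl | h
    · exact Or.inl hz
    · exact Or.inr (ih h)
end listlemmas

variable {n : ℕ}

def iemb (n : ℕ) (g : Fin 2) : Fin n ↪ Fin 2 × Fin n :=
  ⟨fun v => (g, v), fun a b h => by simpa using h⟩

def mblock (n : ℕ) (g : Fin 2) (B e : Finset (Fin n)) : Finset (Fin 2 × Fin n) :=
  B.map (iemb n g) ∪ e.map (iemb n (g+1))

lemma mem_mblock {g : Fin 2} {B e : Finset (Fin n)} {z : Fin 2 × Fin n} :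
    z ∈ mblock n g B e ↔ (z.1 = g ∧ z.2 ∈ B) ∨ (z.1 = g + 1 ∧ z.2 ∈ e) := by
  obtain ⟨z1, z2⟩ := z
  simp only [mblock, iemb, Finset.mem_union, Finset.mem_map, Function.Embedding.coeFn_mk, Prod.mk.injEq]
  constructor
  · rintro (⟨v, hv, rfl, rfl⟩ | ⟨v, hv, rfl, rfl⟩) <;> simp_all
  · rintro (⟨rfl, hv⟩ | ⟨rfl, hv⟩)
    · exact Or.inl ⟨z2, hv, rfl⟩
    · exact Or.inr ⟨z2, hv, rfl⟩

lemma card_mblock (g : Fin 2) (B e : Finset (Fin n)) :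
    (mblock n g B e).card = B.card + e.card := by
  rw [mblock, Finset.card_union_of_disjoint, Finset.card_map, Finset.card_map]
  rw [Finset.disjoint_left]
  intro z hz1 hz2
  simp only [Finset.mem_map, iemb, Function.Embedding.coeFn_mk] at hz1 hz2
  obtain ⟨v, _, rfl⟩ := hz1
  obtain ⟨w, _, hw⟩ := hz2
  have : g + 1 = g := (Prod.ext_iff.mp hw).1
  fin_cases g <;> simp_all

lemma filter_mblock_card (g h : Fin 2) (B e : Finset (Fin n)) :
    ((mblock n g B e).filter fun p => p.1 = h).card
      = (if g = h then B.card else 0) + (if g + 1 = h then e.card else 0) := by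
  rw [mblock, Finset.filter_union, Finset.card_union_of_disjoint, Finset.filter_map,
    Finset.filter_map, Finset.card_map, Finset.card_map]
  · have h1 : (B.filter ((fun p : Fin 2 × Fin n => p.1 = h) ∘ iemb n g)).card
        = if g = h then B.card else 0 := by
      by_cases hgh : g = h <;> simp [iemb, Function.comp, hgh, Finset.filter_true_of_mem,
        Finset.filter_false_of_mem] <;> exact Finset.filter_false_of_mem fun _ _ => hgh
    have h2 : (e.filter ((fun p : Fin 2 × Fin n => p.1 = h) ∘ iemb n (g+1))).card
        = if g + 1 = h then e.card else 0 := by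
      by_cases hgh : g + 1 = h <;> simp [iemb, Function.comp, hgh, Finset.filter_true_of_mem,
        Finset.filter_false_of_mem] <;> exact Finset.filter_false_of_mem fun _ _ => hgh
    rw [h1, h2]
  · exact Finset.disjoint_filter_filter (by
      rw [Finset.disjoint_left]
      intro z hz1 hz2
      simp only [Finset.mem_map, iemb, Function.Embedding.coeFn_mk] at hz1 hz2
      obtain ⟨v, _, rfl⟩ := hz1
      obtain ⟨w, _, hw⟩ := hz2
      have : g + 1 = g := (Prod.ext_iff.mp hw).1
      fin_cases g <;> simp_all)

def mix (n : ℕ) (g : Fin 2) (C E : Multiset (Finset (Fin n))) :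
    Multiset (Finset (Fin 2 × Fin n)) :=
  C.bind fun B => E.map fun e => mblock n g B e

lemma mem_mblock00 {B e : Finset (Fin n)} (u : Fin n) :
    ((0 : Fin 2), u) ∈ mblock n 0 B e ↔ u ∈ B := by
  rw [mem_mblock]; simp [show ((0:Fin 2)+1) = 1 from rfl]
lemma mem_mblock01 {B e : Finset (Fin n)} (u : Fin n) :
    ((1 : Fin 2), u) ∈ mblock n 0 B e ↔ u ∈ e := by
  rw [mem_mblock]; simp [show ((0:Fin 2)+1) = 1 from rfl]
lemma mem_mblock10 {B e : Finset (Fin n)} (u : Fin n) :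
    ((0 : Fin 2), u) ∈ mblock n 1 B e ↔ u ∈ e := by
  rw [mem_mblock]; simp [show ((1:Fin 2)+1) = 0 from rfl]
lemma mem_mblock11 {B e : Finset (Fin n)} (u : Fin n) :
    ((1 : Fin 2), u) ∈ mblock n 1 B e ↔ u ∈ B := by
  rw [mem_mblock]; simp [show ((1:Fin 2)+1) = 0 from rfl]

def allEdges (n : ℕ) : Multiset (Finset (Fin n)) :=
  (Finset.powersetCard 2 (Finset.univ : Finset (Fin n))).val

lemma mem_allEdges {n : ℕ} {e : Finset (Fin n)} : e ∈ allEdges n ↔ e.card = 2 := by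
  simp [allEdges, ← Finset.mem_def, Finset.mem_powersetCard_univ]

lemma card_allEdges (n : ℕ) : Multiset.card (allEdges n) = Nat.choose n 2 := by
  show (Finset.powersetCard 2 (Finset.univ : Finset (Fin n))).card = Nat.choose n 2
  rw [Finset.card_powersetCard, Finset.card_univ, Fintype.card_fin]

lemma filter_allEdges_pair {n : ℕ} {u v : Fin n} (huv : u ≠ v) :
    ((allEdges n).filter fun e => u ∈ e ∧ v ∈ e).card = 1 := by
  have : (allEdges n).filter (fun e => u ∈ e ∧ v ∈ e)
      = ((Finset.powersetCard 2 (Finset.univ : Finset (Fin n))).filter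
          fun e => u ∈ e ∧ v ∈ e).val := by
    simp [allEdges, Finset.filter_val]
  rw [this]
  show ((Finset.powersetCard 2 (Finset.univ : Finset (Fin n))).filter
          fun e => u ∈ e ∧ v ∈ e).card = 1
  rw [Finset.card_eq_one]
  refine ⟨{u, v}, ?_⟩
  ext e
  simp only [Finset.mem_filter, Finset.mem_powersetCard_univ, Finset.mem_singleton]
  constructor
  · rintro ⟨hc, hu, hv⟩
    have hsub : ({u, v} : Finset (Fin n)) ⊆ e := by
      intro w hw
      rcases Finset.mem_insert.mp hw with rfl | hw
      · exact hu
      · rw [Finset.mem_singleton.mp hw]; exact hv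
    have hcuv : ({u, v} : Finset (Fin n)).card = 2 := by
      rw [Finset.card_insert_of_notMem (by simpa using huv), Finset.card_singleton]
    exact (Finset.eq_of_subset_of_card_le hsub (by omega)).symm
  · rintro rfl
    refine ⟨?_, by simp, by simp⟩
    rw [Finset.card_insert_of_notMem (by simpa using huv), Finset.card_singleton]

lemma filter_allEdges_point {n : ℕ} (u : Fin n) :
    ((allEdges n).filter fun e => u ∈ e).card = n - 1 := by
  have : (allEdges n).filter (fun e => u ∈ e)
      = ((Finset.powersetCard 2 (Finset.univ : Finset (Fin n))).filter
          fun e => u ∈ e).val := by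
    simp [allEdges, Finset.filter_val]
  rw [this]
  show ((Finset.powersetCard 2 (Finset.univ : Finset (Fin n))).filter
          fun e => u ∈ e).card = n - 1
  have himg : (Finset.powersetCard 2 (Finset.univ : Finset (Fin n))).filter
      (fun e => u ∈ e) = (Finset.univ.erase u).image (fun v => {u, v}) := by
    ext e
    simp only [Finset.mem_filter, Finset.mem_powersetCard_univ, Finset.mem_image,
      Finset.mem_erase, Finset.mem_univ, and_true]
    constructor
    · rintro ⟨hc, hu⟩
      have h1 : (e.erase u).card = 1 := by
        rw [Finset.card_erase_of_mem hu, hc]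
      obtain ⟨w, hw⟩ := Finset.card_eq_one.mp h1
      have hwne : w ≠ u := by
        have : w ∈ e.erase u := by rw [hw]; exact Finset.mem_singleton_self w
        exact (Finset.mem_erase.mp this).1
      refine ⟨w, hwne, ?_⟩
      rw [← Finset.insert_erase hu, hw]
    · rintro ⟨v, hv, rfl⟩
      exact ⟨by rw [Finset.card_insert_of_notMem (by simpa using (Ne.symm hv)),
        Finset.card_singleton], by simp⟩
  rw [himg, Finset.card_image_of_injOn, Finset.card_erase_of_mem (Finset.mem_univ u),
    Finset.card_univ, Fintype.card_fin]
  intro x hx y hy hxy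
  have hxne : x ≠ u := (Finset.mem_erase.mp hx).1
  have : x ∈ ({u, y} : Finset (Fin n)) := by
    rw [show ({u, y} : Finset (Fin n)) = {u, x} from hxy.symm]; simp
  rcases Finset.mem_insert.mp this with h | h
  · exact absurd h hxne
  · exact Finset.mem_singleton.mp h
section more
variable {α β : Type*}

lemma lsum_mul_right (L : List α) (f : α → ℕ) (c : ℕ) :
    (L.map fun p => f p * c).sum = (L.map f).sum * c := by
  induction L with
  | nil => simp
  | cons p t ih => simp [ih]; ring

lemma lsum_mul_left (L : List α) (f : α → ℕ) (c : ℕ) :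
    (L.map fun p => c * f p).sum = c * (L.map f).sum := by
  induction L with
  | nil => simp
  | cons p t ih => simp [ih]; ring

lemma mix_count {n : ℕ} (g : Fin 2) (C E : Multiset (Finset (Fin n)))
    (P : Finset (Fin 2 × Fin n) → Prop) [DecidablePred P]
    (Q : Finset (Fin n) → Prop) [DecidablePred Q]
    (R : Finset (Fin n) → Prop) [DecidablePred R]
    (h : ∀ B e, P (mblock n g B e) ↔ Q B ∧ R e) :
    ((mix n g C E).filter P).card = (C.filter Q).card * (E.filter R).card :=
  count_bind_split C E (fun B e => mblock n g B e) P Q R h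

lemma filter_true_card (E : Multiset α) :
    (E.filter fun _ => True).card = Multiset.card E := by
  rw [Multiset.filter_eq_self.mpr (fun _ _ => trivial)]
end more


theorem stmt_15 (n lam a : ℕ) (hn : Even n) (hl : lam = 3 * a)
    (D : BIBD n 4 lam)
    (classes : Multiset (Multiset (Finset (Fin n))))
    (hpart : classes.sum = D.blocks)
    (ha : ∀ C ∈ classes, ∀ x : Fin n, (C.filter fun B => x ∈ B).card = a) :
    ∃ G : GDD n 6 (n * (2 * lam + a) / 4) (2 * a * (n - 1)), G.HasConfig 2 4 := by
  by_cases hdeg : n = 0 ∨ a = 0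
  · -- degenerate case: empty design
    have hl1 : n * (2 * lam + a) / 4 = 0 := by
      rcases hdeg with rfl | rfl
      · simp
      · simp [hl]
    have hl2 : 2 * a * (n - 1) = 0 := by
      rcases hdeg with rfl | rfl <;> simp
    refine ⟨⟨0, by simp, 0, by simp, ?_, ?_⟩, ?_⟩
    · intro x y _ _; simp [hl1]
    · intro x y _; simp [hl2]
    · intro B hB; simp at hB
  push_neg at hdeg
  obtain ⟨hn0, ha0⟩ := hdeg
  obtain ⟨t, ht⟩ := hn
  have ht' : n = 2 * t := by omega
  have htpos : 0 < t := by omega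
  -- every class has the same size
  have hclasscard : ∀ C ∈ classes, 4 * Multiset.card C = n * a := by
    intro C hC
    have hCle : C ≤ classes.sum := Multiset.le_sum_of_mem hC
    have h3 : ∀ B ∈ C, B.card = 4 := fun B hB =>
      D.blockCard B (by rw [← hpart]; exact Multiset.mem_of_le hCle hB)
    have h1 := point_double_count (α := Fin n) C
    rw [Finset.sum_congr rfl (fun x _ => ha C hC x)] at h1
    rw [Multiset.map_congr rfl h3] at h1
    simp only [Finset.sum_const, Finset.card_univ, Fintype.card_fin, smul_eq_mul,
      Multiset.map_const', Multiset.sum_replicate] at h1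
    omega
  -- replication number of each point in D
  have hrep : ∀ x : Fin n,
      ((D.blocks.filter fun B => x ∈ B).card) = Multiset.card classes * a := by
    intro x
    rw [← hpart, msum_filter_card]
    rw [Multiset.map_congr rfl (fun C hC => ha C hC x)]
    simp [Multiset.map_const', Multiset.sum_replicate]
  -- the number of classes is n - 1
  have hm : Multiset.card classes = n - 1 := by
    have hnpos : 0 < n := Nat.pos_of_ne_zero hn0
    set x : Fin n := ⟨0, hnpos⟩
    have hdc := pair_double_count x D.blocks
    rw [Finset.sum_congr rfl (fun y hy =>
      D.pairs x y (Ne.symm (Finset.mem_erase.mp hy).1))] at hdc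
    rw [Multiset.map_congr rfl (fun B hB => show
        (if x ∈ B then (B.erase x).card else 0) = if x ∈ B then 3 else 0 by
      by_cases hx : x ∈ B
      · simp [hx, Finset.card_erase_of_mem hx, D.blockCard B hB]
      · simp [hx])] at hdc
    rw [sum_ite_card, hrep x] at hdc
    simp only [Finset.sum_const, Finset.card_erase_of_mem (Finset.mem_univ x),
      Finset.card_univ, Fintype.card_fin, smul_eq_mul] at hdc
    have h1 : (n - 1) * (a * 3) = Multiset.card classes * (a * 3) := by
      rw [hl] at hdc
      calc (n-1) * (a*3) = (n-1) * (3*a) := by ring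
      _ = Multiset.card classes * a * 3 := hdc
      _ = Multiset.card classes * (a*3) := by ring
    exact (Nat.eq_of_mul_eq_mul_right (by omega) h1).symm
  -- a nonempty class, the common class size q
  obtain ⟨C0, hC0⟩ : ∃ C0, C0 ∈ classes := by
    rw [← Multiset.card_pos_iff_exists_mem, hm]; omega
  set q := Multiset.card C0 with hqdef
  have h4q : n * a = 4 * q := (hclasscard C0 hC0).symm
  have hq : ∀ C ∈ classes, Multiset.card C = q := by
    intro C hC
    have := hclasscard C hC
    omega
  -- split the edge set of K_n into n-1 parts of size t
  have hedgecard : Multiset.card (allEdges n) = (n - 1) * t := by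
    rw [card_allEdges, Nat.choose_two_right]
    have h2 : n * (n - 1) = 2 * ((n - 1) * t) := by
      calc n * (n - 1) = 2 * t * (n - 1) := by rw [← ht']
      _ = 2 * ((n - 1) * t) := by ring
    rw [h2, Nat.mul_div_cancel_left _ (by norm_num)]
  obtain ⟨Es, hEslen, hEscard, hEssum⟩ := chunk_exists t (n - 1) (allEdges n) hedgecard
  have hlen1 : classes.toList.length ≤ Es.length := by
    rw [Multiset.length_toList, hm, hEslen]
  have hlen2 : Es.length ≤ classes.toList.length := by
    rw [Multiset.length_toList, hm, hEslen]
  set L := classes.toList.zip Es with hLdef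
  have hLlen : L.length = n - 1 := by
    rw [hLdef, List.length_zip, Multiset.length_toList, hm, hEslen, min_self]
  have hmemL : ∀ p ∈ L, p.1 ∈ classes ∧ p.2 ∈ Es := by
    rintro ⟨c, e⟩ hp
    have := List.of_mem_zip hp
    exact ⟨Multiset.mem_toList.mp this.1, this.2⟩
  -- the blocks of the GDD
  set Blocks : Multiset (Finset (Fin 2 × Fin n)) :=
    (L.map fun p => mix n 0 p.1 p.2 + mix n 1 p.1 p.2).sum with hBdef
  -- generic counting over Blocks
  have hcount : ∀ (P : Finset (Fin 2 × Fin n) → Prop) (_ : DecidablePred P),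
      ((Blocks.filter P).card : ℕ)
        = (L.map fun p => ((mix n 0 p.1 p.2).filter P).card
            + ((mix n 1 p.1 p.2).filter P).card).sum := by
    intro P _
    rw [hBdef, lsum_filter_card, List.map_map]
    refine congrArg List.sum (List.map_congr_left fun p _ => ?_)
    simp [Function.comp, Multiset.filter_add]
  -- summing class-filters over L gives the filter over D.blocks
  have hsumC : ∀ (Q : Finset (Fin n) → Prop) (_ : DecidablePred Q),
      (L.map fun p => ((p.1.filter Q).card : ℕ)).sum = (D.blocks.filter Q).card := by
    intro Q _
    have h1 := lsum_fst classes.toList Es hlen1 (fun C => ((C.filter Q).card : ℕ))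
    rw [toList_map_sum, ← msum_filter_card, hpart] at h1
    exact h1
  -- summing edge-filters over L gives the filter over allEdges
  have hsumE : ∀ (R : Finset (Fin n) → Prop) (_ : DecidablePred R),
      (L.map fun p => ((p.2.filter R).card : ℕ)).sum = ((allEdges n).filter R).card := by
    intro R _
    have h1 := lsum_snd classes.toList Es hlen2 (fun E => ((E.filter R).card : ℕ))
    rw [← lsum_filter_card, hEssum] at h1
    exact h1
  have hCmem : ∀ p ∈ L, ∀ B ∈ p.1, B ∈ D.blocks := fun p hp B hB => by
    rw [← hpart]; exact mem_msum_of_mem (hmemL p hp).1 hB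
  have hEmem : ∀ p ∈ L, ∀ e ∈ p.2, e ∈ allEdges n := fun p hp e he =>
    hEssum ▸ mem_listsum_of_mem (hmemL p hp).2 he
  have fin2 : ∀ g : Fin 2, g = 0 ∨ g = 1 := by decide
  refine ⟨⟨Blocks, ?_, (n-1) * (a*t) + q * (n-1), ?_, ?_, ?_⟩, ?_⟩
  · -- blockCard
    intro Blk hBlk
    rw [hBdef] at hBlk
    obtain ⟨s, hs, hBlk⟩ := mem_listsum hBlk
    obtain ⟨p, hp, rfl⟩ := List.mem_map.mp hs
    rw [Multiset.mem_add] at hBlk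
    have key : ∀ g : Fin 2, Blk ∈ mix n g p.1 p.2 → Blk.card = 6 := by
      intro g hg
      rw [mix, Multiset.mem_bind] at hg
      obtain ⟨B, hB, hg⟩ := hg
      obtain ⟨e, he, rfl⟩ := Multiset.mem_map.mp hg
      rw [card_mblock, D.blockCard B (hCmem p hp B hB),
        mem_allEdges.mp (hEmem p hp e he)]
    rcases hBlk with h | h
    · exact key 0 h
    · exact key 1 h
  · -- pointRep
    rintro ⟨g, u⟩
    rcases fin2 g with rfl | rfl
    · rw [hcount _ inferInstance]
      have hterm : ∀ p ∈ L,
          ((mix n 0 p.1 p.2).filter fun B => ((0 : Fin 2), u) ∈ B).card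
            + ((mix n 1 p.1 p.2).filter fun B => ((0 : Fin 2), u) ∈ B).card
          = a * t + q * ((p.2.filter fun e => u ∈ e).card) := by
        intro p hp
        rw [mix_count 0 p.1 p.2 (fun B => ((0 : Fin 2), u) ∈ B)
              (fun B => u ∈ B) (fun _ => True) (fun B e => by simp [mem_mblock00]),
            mix_count 1 p.1 p.2 (fun B => ((0 : Fin 2), u) ∈ B)
              (fun _ => True) (fun e => u ∈ e) (fun B e => by simp [mem_mblock10]),
            filter_true_card, Multiset.filter_eq_self.mpr (fun _ _ => trivial),
            ha p.1 (hmemL p hp).1 u, hEscard p.2 (hmemL p hp).2, hq p.1 (hmemL p hp).1]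
      rw [List.map_congr_left hterm, lsum_map_add, lsum_const, hLlen, lsum_mul_left,
        hsumE _ inferInstance, filter_allEdges_point u]
    · rw [hcount _ inferInstance]
      have hterm : ∀ p ∈ L,
          ((mix n 0 p.1 p.2).filter fun B => ((1 : Fin 2), u) ∈ B).card
            + ((mix n 1 p.1 p.2).filter fun B => ((1 : Fin 2), u) ∈ B).card
          = q * ((p.2.filter fun e => u ∈ e).card) + a * t := by
        intro p hp
        rw [mix_count 0 p.1 p.2 (fun B => ((1 : Fin 2), u) ∈ B)
              (fun _ => True) (fun e => u ∈ e) (fun B e => by simp [mem_mblock01]),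
            mix_count 1 p.1 p.2 (fun B => ((1 : Fin 2), u) ∈ B)
              (fun B => u ∈ B) (fun _ => True) (fun B e => by simp [mem_mblock11]),
            filter_true_card, Multiset.filter_eq_self.mpr (fun _ _ => trivial),
            ha p.1 (hmemL p hp).1 u, hEscard p.2 (hmemL p hp).2, hq p.1 (hmemL p hp).1]
      rw [List.map_congr_left hterm, lsum_map_add, lsum_const, hLlen, lsum_mul_left,
        hsumE _ inferInstance, filter_allEdges_point u]
      exact add_comm _ _
  · -- samePairs
    rintro ⟨g, u⟩ ⟨g', v⟩ hxy hgrp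
    have hg : g = g' := hgrp
    subst hg
    have huv : u ≠ v := fun h => hxy (by rw [h])
    have hkey : n * (2 * lam + a) / 4 = lam * t + q := by
      have h44 : n * (2 * lam + a) = 4 * (lam * t + q) := by
        calc n * (2 * lam + a) = n * (2 * lam) + n * a := by ring
        _ = 2 * t * (2 * lam) + 4 * q := by rw [h4q, ht']
        _ = 4 * (lam * t + q) := by ring
      rw [h44, Nat.mul_div_cancel_left _ (by norm_num)]
    rcases fin2 g with rfl | rfl
    · rw [hcount _ inferInstance, hkey]
      have hterm : ∀ p ∈ L,
          ((mix n 0 p.1 p.2).filter fun B => ((0 : Fin 2), u) ∈ B ∧ ((0 : Fin 2), v) ∈ B).card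
            + ((mix n 1 p.1 p.2).filter fun B => ((0 : Fin 2), u) ∈ B ∧ ((0 : Fin 2), v) ∈ B).card
          = ((p.1.filter fun B => u ∈ B ∧ v ∈ B).card) * t
            + q * ((p.2.filter fun e => u ∈ e ∧ v ∈ e).card) := by
        intro p hp
        rw [mix_count 0 p.1 p.2 (fun B => ((0 : Fin 2), u) ∈ B ∧ ((0 : Fin 2), v) ∈ B)
              (fun B => u ∈ B ∧ v ∈ B) (fun _ => True)
              (fun B e => by simp [mem_mblock00]),
            mix_count 1 p.1 p.2 (fun B => ((0 : Fin 2), u) ∈ B ∧ ((0 : Fin 2), v) ∈ B)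
              (fun _ => True) (fun e => u ∈ e ∧ v ∈ e)
              (fun B e => by simp [mem_mblock10]),
            filter_true_card, Multiset.filter_eq_self.mpr (fun _ _ => trivial),
            hEscard p.2 (hmemL p hp).2, hq p.1 (hmemL p hp).1]
      rw [List.map_congr_left hterm, lsum_map_add, lsum_mul_right, hsumC _ inferInstance,
        D.pairs u v huv, lsum_mul_left, hsumE _ inferInstance,
        filter_allEdges_pair huv, mul_one]
    · rw [hcount _ inferInstance, hkey]
      have hterm : ∀ p ∈ L,
          ((mix n 0 p.1 p.2).filter fun B => ((1 : Fin 2), u) ∈ B ∧ ((1 : Fin 2), v) ∈ B).card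
            + ((mix n 1 p.1 p.2).filter fun B => ((1 : Fin 2), u) ∈ B ∧ ((1 : Fin 2), v) ∈ B).card
          = q * ((p.2.filter fun e => u ∈ e ∧ v ∈ e).card)
            + ((p.1.filter fun B => u ∈ B ∧ v ∈ B).card) * t := by
        intro p hp
        rw [mix_count 0 p.1 p.2 (fun B => ((1 : Fin 2), u) ∈ B ∧ ((1 : Fin 2), v) ∈ B)
              (fun _ => True) (fun e => u ∈ e ∧ v ∈ e)
              (fun B e => by simp [mem_mblock01]),
            mix_count 1 p.1 p.2 (fun B => ((1 : Fin 2), u) ∈ B ∧ ((1 : Fin 2), v) ∈ B)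
              (fun B => u ∈ B ∧ v ∈ B) (fun _ => True)
              (fun B e => by simp [mem_mblock11]),
            filter_true_card, Multiset.filter_eq_self.mpr (fun _ _ => trivial),
            hEscard p.2 (hmemL p hp).2, hq p.1 (hmemL p hp).1]
      rw [List.map_congr_left hterm, lsum_map_add, lsum_mul_right, hsumC _ inferInstance,
        D.pairs u v huv, lsum_mul_left, hsumE _ inferInstance,
        filter_allEdges_pair huv, mul_one]
      exact add_comm _ _
  · -- crossPairs
    rintro ⟨g, u⟩ ⟨g', v⟩ hgrp
    have hfinal : a * (n - 1) + a * (n - 1) = 2 * a * (n - 1) := by ring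
    rcases fin2 g with rfl | rfl <;> rcases fin2 g' with rfl | rfl
    · exact absurd rfl hgrp
    · rw [hcount _ inferInstance]
      have hterm : ∀ p ∈ L,
          ((mix n 0 p.1 p.2).filter fun B => ((0 : Fin 2), u) ∈ B ∧ ((1 : Fin 2), v) ∈ B).card
            + ((mix n 1 p.1 p.2).filter fun B => ((0 : Fin 2), u) ∈ B ∧ ((1 : Fin 2), v) ∈ B).card
          = a * ((p.2.filter fun e => v ∈ e).card) + a * ((p.2.filter fun e => u ∈ e).card) := by
        intro p hp
        rw [mix_count 0 p.1 p.2 (fun B => ((0 : Fin 2), u) ∈ B ∧ ((1 : Fin 2), v) ∈ B)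
              (fun B => u ∈ B) (fun e => v ∈ e)
              (fun B e => by simp [mem_mblock00, mem_mblock01]),
            mix_count 1 p.1 p.2 (fun B => ((0 : Fin 2), u) ∈ B ∧ ((1 : Fin 2), v) ∈ B)
              (fun B => v ∈ B) (fun e => u ∈ e)
              (fun B e => by simp [mem_mblock10, mem_mblock11, and_comm]),
            ha p.1 (hmemL p hp).1 u, ha p.1 (hmemL p hp).1 v]
      rw [List.map_congr_left hterm, lsum_map_add, lsum_mul_left, lsum_mul_left,
        hsumE _ inferInstance, hsumE _ inferInstance,
        filter_allEdges_point u, filter_allEdges_point v, hfinal]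
    · rw [hcount _ inferInstance]
      have hterm : ∀ p ∈ L,
          ((mix n 0 p.1 p.2).filter fun B => ((1 : Fin 2), u) ∈ B ∧ ((0 : Fin 2), v) ∈ B).card
            + ((mix n 1 p.1 p.2).filter fun B => ((1 : Fin 2), u) ∈ B ∧ ((0 : Fin 2), v) ∈ B).card
          = a * ((p.2.filter fun e => u ∈ e).card) + a * ((p.2.filter fun e => v ∈ e).card) := by
        intro p hp
        rw [mix_count 0 p.1 p.2 (fun B => ((1 : Fin 2), u) ∈ B ∧ ((0 : Fin 2), v) ∈ B)
              (fun B => v ∈ B) (fun e => u ∈ e)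
              (fun B e => by simp [mem_mblock00, mem_mblock01, and_comm]),
            mix_count 1 p.1 p.2 (fun B => ((1 : Fin 2), u) ∈ B ∧ ((0 : Fin 2), v) ∈ B)
              (fun B => u ∈ B) (fun e => v ∈ e)
              (fun B e => by simp [mem_mblock10, mem_mblock11]),
            ha p.1 (hmemL p hp).1 u, ha p.1 (hmemL p hp).1 v]
      rw [List.map_congr_left hterm, lsum_map_add, lsum_mul_left, lsum_mul_left,
        hsumE _ inferInstance, hsumE _ inferInstance,
        filter_allEdges_point u, filter_allEdges_point v]
      omega
    · exact absurd rfl hgrp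
  · -- HasConfig
    intro Blk hBlk
    obtain ⟨s, hs, hBlk⟩ := mem_listsum hBlk
    obtain ⟨p, hp, rfl⟩ := List.mem_map.mp hs
    rw [Multiset.mem_add] at hBlk
    rcases hBlk with h | h
    · rw [mix, Multiset.mem_bind] at h
      obtain ⟨B, hB, h⟩ := h
      obtain ⟨e, he, rfl⟩ := Multiset.mem_map.mp h
      right
      rw [filter_mblock_card, filter_mblock_card]
      have hB4 : B.card = 4 := D.blockCard B (hCmem p hp B hB)
      have he2 : e.card = 2 := mem_allEdges.mp (hEmem p hp e he)
      constructor
      · rw [if_pos rfl, if_neg (by decide), hB4]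
      · rw [if_neg (by decide), if_pos (by decide), he2]
    · rw [mix, Multiset.mem_bind] at h
      obtain ⟨B, hB, h⟩ := h
      obtain ⟨e, he, rfl⟩ := Multiset.mem_map.mp h
      left
      rw [filter_mblock_card, filter_mblock_card]
      have hB4 : B.card = 4 := D.blockCard B (hCmem p hp B hB)
      have he2 : e.card = 2 := mem_allEdges.mp (hEmem p hp e he)
      constructor
      · rw [if_neg (by decide), if_pos (by decide), he2]
      · rw [if_pos rfl, if_neg (by decide), hB4]
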